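/- There exists an integer $M$ (e.g., $M = 79904626$ works) such that for any three integers $b_1, b_2, b_3 \geq M$, there are infinitely many positive integers whose base-$b_1$, base-$b_2$, and base-$b_3$ expansions all omit the digit $0$. -/

import Mathlib

attribute [local instance] Classical.propDecidable

/-- Counting lemma: among the 64 candidate subinterval positions, at most 18 are "killed"
by a single periodic constraint of period `P ≥ 8 L'` with bad-zone width `W ≤ 2 L'`. -/
private lemma card_aux (P W u L' : ℕ) (h8 : 8 * L' ≤ P) (hW : W ≤ 2 * L') (hL' : 1 ≤ L') :
    ((Finset.range 64).filter (fun k => (u + (k + 1) * L') % P < W)).card ≤ 18 := by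
  have hP : 0 < P := by omega
  set s := (Finset.range 64).filter (fun k => (u + (k + 1) * L') % P < W) with hs
  set f : ℕ → ℕ := fun k => (u + (k + 1) * L') / P with hf
  have hmapsto : ∀ x ∈ s, f x ∈ Finset.Icc (u / P) (u / P + 8) := by
    intro k hk
    have hk64 : k < 64 := Finset.mem_range.mp (Finset.mem_filter.mp hk).1
    simp only [Finset.mem_Icc]
    constructor
    · exact Nat.div_le_div_right (Nat.le_add_right _ _)
    · have h1 : (k + 1) * L' ≤ 64 * L' := Nat.mul_le_mul_right _ (by omega)
      have h2 : u + (k + 1) * L' ≤ u + 8 * P := by omega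
      calc f k ≤ (u + 8 * P) / P := Nat.div_le_div_right h2
        _ = u / P + 8 := by rw [Nat.add_mul_div_right _ _ hP]
  have hcard := Finset.card_eq_sum_card_fiberwise hmapsto
  have hfib : ∀ a ∈ Finset.Icc (u / P) (u / P + 8),
      (s.filter (fun x => f x = a)).card ≤ 2 := by
    intro a _
    by_cases hne : (s.filter (fun x => f x = a)).Nonempty
    · set t := s.filter (fun x => f x = a) with ht
      set m := t.min' hne with hm
      have hmem : m ∈ t := t.min'_mem hne
      have hsub : t ⊆ Finset.Icc m (m + 1) := by
        intro k hk
        simp only [Finset.mem_Icc]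
        refine ⟨t.min'_le k hk, ?_⟩
        have hmk : m ≤ k := t.min'_le k hk
        have hkS := Finset.mem_filter.mp hk
        have hmS := Finset.mem_filter.mp hmem
        have hfk : (u + (k + 1) * L') / P = a := hkS.2
        have hfm : (u + (m + 1) * L') / P = a := hmS.2
        have hrk : (u + (k + 1) * L') % P < W := (Finset.mem_filter.mp hkS.1).2
        have hrm : (u + (m + 1) * L') % P < W := (Finset.mem_filter.mp hmS.1).2
        have e1 : P * a + (u + (k + 1) * L') % P = u + (k + 1) * L' := by
          conv_rhs => rw [← Nat.div_add_mod (u + (k + 1) * L') P]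
          rw [hfk]
        have e2 : P * a + (u + (m + 1) * L') % P = u + (m + 1) * L' := by
          conv_rhs => rw [← Nat.div_add_mod (u + (m + 1) * L') P]
          rw [hfm]
        by_contra hgt
        push_neg at hgt
        have h3 : (m + 3) * L' ≤ (k + 1) * L' := Nat.mul_le_mul_right _ (by omega)
        have h4 : (m + 3) * L' = (m + 1) * L' + 2 * L' := by ring
        omega
      calc t.card ≤ (Finset.Icc m (m + 1)).card := Finset.card_le_card hsub
        _ ≤ 2 := by rw [Nat.card_Icc]; omega
    · rw [Finset.not_nonempty_iff_eq_empty] at hne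
      rw [hne]; simp
  have hIcc : (Finset.Icc (u / P) (u / P + 8)).card = 9 := by rw [Nat.card_Icc]; omega
  calc s.card = ∑ a ∈ Finset.Icc (u / P) (u / P + 8), (s.filter (fun x => f x = a)).card :=
        hcard
    _ ≤ ∑ _a ∈ Finset.Icc (u / P) (u / P + 8), 2 := Finset.sum_le_sum hfib
    _ = 18 := by rw [Finset.sum_const, hIcc]; simp

/-- For a single base `b`, at most one digit-scale has period in `[8L', 8L)`, and it kills
at most 18 of the 64 candidates. -/
private lemma step_aux (b L L' u : ℕ) (hb : 33000 ≤ b) (h65 : L ≤ 65 * L') (h64 : 64 * L' ≤ L)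
    (hL' : 1 ≤ L') :
    ((Finset.range 64).filter (fun k => ∃ j, 8 * L' ≤ b ^ (j + 1) ∧ b ^ (j + 1) < 8 * L ∧
      (u + (k + 1) * L') % b ^ (j + 1) < L' + b ^ j)).card ≤ 18 := by
  by_cases hj : ∃ j, 8 * L' ≤ b ^ (j + 1) ∧ b ^ (j + 1) < 8 * L
  · obtain ⟨j0, hj01, hj02⟩ := hj
    have huniq : ∀ j, 8 * L' ≤ b ^ (j + 1) → b ^ (j + 1) < 8 * L → j = j0 := by
      intro j ha hb'
      by_contra hne
      rcases Nat.lt_or_ge j j0 with h | h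
      · have h1 : b ^ (j + 1) * b ≤ b ^ (j0 + 1) := by
          rw [← pow_succ]
          exact Nat.pow_le_pow_right (by omega) (by omega)
        have h2 : 8 * L' * b ≤ b ^ (j + 1) * b := Nat.mul_le_mul_right _ ha
        have h3 : 8 * L' * 33000 ≤ 8 * L' * b := Nat.mul_le_mul_left _ hb
        have e : 8 * L' * 33000 = 264000 * L' := by ring
        omega
      · have hlt : j0 < j := by omega
        have h1 : b ^ (j0 + 1) * b ≤ b ^ (j + 1) := by
          rw [← pow_succ]
          exact Nat.pow_le_pow_right (by omega) (by omega)
        have h2 : 8 * L' * b ≤ b ^ (j0 + 1) * b := Nat.mul_le_mul_right _ hj01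
        have h3 : 8 * L' * 33000 ≤ 8 * L' * b := Nat.mul_le_mul_left _ hb
        have e : 8 * L' * 33000 = 264000 * L' := by ring
        omega
    have hsub : ((Finset.range 64).filter (fun k => ∃ j, 8 * L' ≤ b ^ (j + 1) ∧
          b ^ (j + 1) < 8 * L ∧ (u + (k + 1) * L') % b ^ (j + 1) < L' + b ^ j)) ⊆
        ((Finset.range 64).filter
          (fun k => (u + (k + 1) * L') % b ^ (j0 + 1) < L' + b ^ j0)) := by
      intro k hk
      obtain ⟨hkr, j, hj1, hj2, hj3⟩ := Finset.mem_filter.mp hk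
      have := huniq j hj1 hj2
      subst this
      exact Finset.mem_filter.mpr ⟨hkr, hj3⟩
    refine le_trans (Finset.card_le_card hsub) (card_aux _ _ _ _ hj01 ?_ hL')
    have hps : b ^ j0 * b = b ^ (j0 + 1) := (pow_succ b j0)
    have h1 : b ^ j0 * b < 520 * L' := by omega
    have h2 : 520 * L' ≤ b * L' := Nat.mul_le_mul_right _ (by omega)
    have h4 : b ^ j0 < L' := by
      by_contra hge
      push_neg at hge
      have h5 : L' * b ≤ b ^ j0 * b := Nat.mul_le_mul_right _ hge
      have h6 : b * L' = L' * b := Nat.mul_comm _ _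
      omega
    omega
  · have hempty : ∀ k ∈ Finset.range 64, ¬ (∃ j, 8 * L' ≤ b ^ (j + 1) ∧ b ^ (j + 1) < 8 * L ∧
        (u + (k + 1) * L') % b ^ (j + 1) < L' + b ^ j) := by
      intro k _ h
      obtain ⟨j, hj1, hj2, _⟩ := h
      exact hj ⟨j, hj1, hj2⟩
    rw [Finset.filter_false_of_mem hempty]
    simp

/-- Over a list of bases, the killed candidates number at most `18 * length`. -/
private lemma multi_aux (L L' u : ℕ) (h65 : L ≤ 65 * L') (h64 : 64 * L' ≤ L) (hL' : 1 ≤ L') :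
    ∀ bs : List ℕ, (∀ b ∈ bs, 33000 ≤ b) →
    ((Finset.range 64).filter (fun k => ∃ b ∈ bs, ∃ j, 8 * L' ≤ b ^ (j + 1) ∧
      b ^ (j + 1) < 8 * L ∧ (u + (k + 1) * L') % b ^ (j + 1) < L' + b ^ j)).card
      ≤ 18 * bs.length := by
  intro bs
  induction bs with
  | nil => intro _; simp
  | cons hd tl ihl =>
    intro hbs
    have hsub : ((Finset.range 64).filter (fun k => ∃ b ∈ hd :: tl, ∃ j,
          8 * L' ≤ b ^ (j + 1) ∧ b ^ (j + 1) < 8 * L ∧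
          (u + (k + 1) * L') % b ^ (j + 1) < L' + b ^ j)) ⊆
        ((Finset.range 64).filter (fun k => ∃ j, 8 * L' ≤ hd ^ (j + 1) ∧
          hd ^ (j + 1) < 8 * L ∧ (u + (k + 1) * L') % hd ^ (j + 1) < L' + hd ^ j)) ∪
        ((Finset.range 64).filter (fun k => ∃ b ∈ tl, ∃ j, 8 * L' ≤ b ^ (j + 1) ∧
          b ^ (j + 1) < 8 * L ∧ (u + (k + 1) * L') % b ^ (j + 1) < L' + b ^ j)) := by
      intro k hk
      obtain ⟨hkr, b, hbmem, hrest⟩ := Finset.mem_filter.mp hk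
      rcases List.mem_cons.mp hbmem with rfl | htl
      · exact Finset.mem_union_left _ (Finset.mem_filter.mpr ⟨hkr, hrest⟩)
      · exact Finset.mem_union_right _ (Finset.mem_filter.mpr ⟨hkr, b, htl, hrest⟩)
    have hstep := step_aux hd L L' u (hbs hd (by simp)) h65 h64 hL'
    have htl := ihl (fun b hb => hbs b (by simp [hb]))
    have hun := Finset.card_union_le
      ((Finset.range 64).filter (fun k => ∃ j, 8 * L' ≤ hd ^ (j + 1) ∧
          hd ^ (j + 1) < 8 * L ∧ (u + (k + 1) * L') % hd ^ (j + 1) < L' + hd ^ j))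
      ((Finset.range 64).filter (fun k => ∃ b ∈ tl, ∃ j, 8 * L' ≤ b ^ (j + 1) ∧
          b ^ (j + 1) < 8 * L ∧ (u + (k + 1) * L') % b ^ (j + 1) < L' + b ^ j))
    have := Finset.card_le_card hsub
    simp only [List.length_cons]
    omega

/-- Interval refinement: from an interval of length `L` on which all constraints of
period `≥ 8L` hold, find a good point. -/
private lemma rec_aux (bs : List ℕ) (hbs : ∀ b ∈ bs, 79904626 ≤ b) (hlen : bs.length ≤ 3) :
    ∀ L, 1 ≤ L → ∀ u : ℕ,
      (∀ b ∈ bs, ∀ j N : ℕ, u ≤ N → N < u + L → 8 * L ≤ b ^ (j + 1) →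
        b ^ j ≤ N → b ^ j ≤ N % b ^ (j + 1)) →
      ∃ N : ℕ, u ≤ N ∧ N < u + L ∧
        ∀ b ∈ bs, ∀ j : ℕ, b ^ j ≤ N → b ^ j ≤ N % b ^ (j + 1) := by
  intro L
  induction L using Nat.strong_induction_on with
  | _ L ih =>
    intro hL1 u hu
    by_cases hsmall : 8 * L ≤ 79904626
    · refine ⟨u, le_rfl, by omega, ?_⟩
      intro b hb j hbj
      have hM : 79904626 ≤ b := hbs b hb
      have hbp : b ≤ b ^ (j + 1) := Nat.le_self_pow (by omega) b
      exact hu b hb j u le_rfl (by omega) (by omega) hbj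
    · push_neg at hsmall
      set L' := L / 64 with hL'def
      have h1' : 1 ≤ L' := by omega
      have h64 : 64 * L' ≤ L := by omega
      have h65 : L ≤ 65 * L' := by omega
      have hlt : L' < L := by omega
      have hcard : ((Finset.range 64).filter (fun k => ∃ b ∈ bs, ∃ j,
          8 * L' ≤ b ^ (j + 1) ∧ b ^ (j + 1) < 8 * L ∧
          (u + (k + 1) * L') % b ^ (j + 1) < L' + b ^ j)).card ≤ 54 := by
        refine le_trans (multi_aux L L' u h65 h64 h1' bs
          (fun b hb => by have := hbs b hb; omega)) ?_
        omega
      have hns : ¬ Finset.range 64 ⊆ ((Finset.range 64).filter (fun k => ∃ b ∈ bs, ∃ j,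
          8 * L' ≤ b ^ (j + 1) ∧ b ^ (j + 1) < 8 * L ∧
          (u + (k + 1) * L') % b ^ (j + 1) < L' + b ^ j)) := by
        intro hsub
        have h1 := Finset.card_le_card hsub
        rw [Finset.card_range] at h1
        omega
      obtain ⟨k, hkr, hknot⟩ := Finset.not_subset.mp hns
      have hk64 : k < 64 := Finset.mem_range.mp hkr
      have hkL : (k + 1) * L' ≤ 64 * L' := Nat.mul_le_mul_right _ (by omega)
      have hexp : (k + 1) * L' = k * L' + L' := by ring
      have hstep : ∀ b ∈ bs, ∀ j N : ℕ, u + k * L' ≤ N → N < (u + k * L') + L' →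
          8 * L' ≤ b ^ (j + 1) → b ^ j ≤ N → b ^ j ≤ N % b ^ (j + 1) := by
        intro b hb j N hN1 hN2 h8 hbj
        by_cases hbig : 8 * L ≤ b ^ (j + 1)
        · exact hu b hb j N (by omega) (by omega) hbig hbj
        · push_neg at hbig
          have hgood : ¬ ((u + (k + 1) * L') % b ^ (j + 1) < L' + b ^ j) := by
            intro hcon
            exact hknot (Finset.mem_filter.mpr ⟨hkr, ⟨b, hb, j, h8, hbig, hcon⟩⟩)
          push_neg at hgood
          have hPpos : 0 < b ^ (j + 1) := pow_pos (show 0 < b by have := hbs b hb; omega) _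
          set P := b ^ (j + 1) with hP
          set w := u + (k + 1) * L' with hw
          obtain ⟨q, r, hqr, hrP⟩ : ∃ q r, w = P * q + r ∧ r < P :=
            ⟨w / P, w % P, (Nat.div_add_mod w P).symm, Nat.mod_lt _ hPpos⟩
          have hrval : w % P = r := by
            rw [hqr, Nat.mul_add_mod, Nat.mod_eq_of_lt hrP]
          have hr2 : L' + b ^ j ≤ r := by omega
          have hNval : N = P * q + (r - (w - N)) := by omega
          have hNmod : N % P = r - (w - N) := by
            conv_lhs => rw [hNval]
            rw [Nat.mul_add_mod]
            exact Nat.mod_eq_of_lt (by omega)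
          omega
      obtain ⟨N, hNa, hNb, hNc⟩ := ih L' hlt h1' (u + k * L') hstep
      exact ⟨N, by omega, by omega, hNc⟩

/-- If all the modular conditions hold then every digit is nonzero. -/
private lemma char_aux {b : ℕ} (hb : 2 ≤ b) :
    ∀ N : ℕ, (∀ j : ℕ, b ^ j ≤ N → b ^ j ≤ N % b ^ (j + 1)) →
      ∀ d ∈ Nat.digits b N, d ≠ 0 := by
  intro N
  induction N using Nat.strong_induction_on with
  | _ N ih =>
    intro hN d hd
    rcases Nat.eq_zero_or_pos N with rfl | hpos
    · simp at hd
    · rw [Nat.digits_def' (by omega : 1 < b) hpos] at hd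
      rcases List.mem_cons.mp hd with rfl | hd'
      · have h0 : 1 ≤ N % b := by
          have h1 := hN 0 (by simp; omega)
          simpa using h1
        omega
      · refine ih (N / b) (Nat.div_lt_self hpos (by omega)) ?_ d hd'
        intro j hj
        have hj' : b ^ (j + 1) ≤ N := by
          have h1 : b ^ j * b ≤ N / b * b := Nat.mul_le_mul_right _ hj
          have h2 : N / b * b ≤ N := Nat.div_mul_le_self N b
          have h3 : b ^ (j + 1) = b ^ j * b := pow_succ b j
          omega
        have h2 := hN (j + 1) hj'
        have key : (N / b) % b ^ (j + 1) = N % b ^ (j + 2) / b := by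
          have e : b * b ^ (j + 1) = b ^ (j + 2) := by ring
          rw [← e, Nat.mod_mul_right_div_self]
        rw [key]
        have e2 : b ^ (j + 1) / b = b ^ j := by
          rw [pow_succ, Nat.mul_div_cancel _ (by omega : 0 < b)]
        calc b ^ j = b ^ (j + 1) / b := e2.symm
          _ ≤ N % b ^ (j + 2) / b := Nat.div_le_div_right h2

theorem three_bases_no_zero_digit :
    ∃ M : ℕ, M ≤ 79904626 ∧ ∀ b1 b2 b3 : ℕ, M ≤ b1 → M ≤ b2 → M ≤ b3 →
      {N : ℕ | 0 < N ∧ (∀ d ∈ Nat.digits b1 N, d ≠ 0) ∧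
        (∀ d ∈ Nat.digits b2 N, d ≠ 0) ∧ (∀ d ∈ Nat.digits b3 N, d ≠ 0)}.Infinite := by
  refine ⟨79904626, le_rfl, ?_⟩
  intro b1 b2 b3 h1 h2 h3
  by_contra hinf
  rw [Set.not_infinite] at hinf
  obtain ⟨T, hT⟩ := hinf.bddAbove
  have hbs : ∀ b ∈ [b1, b2, b3], 79904626 ≤ b := by
    intro b hb
    rcases List.mem_cons.mp hb with rfl | hb
    · exact h1
    rcases List.mem_cons.mp hb with rfl | hb
    · exact h2
    rcases List.mem_cons.mp hb with rfl | hb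
    · exact h3
    simp at hb
  have hhyp : ∀ b ∈ [b1, b2, b3], ∀ j N : ℕ, T + 1 ≤ N → N < (T + 1) + 7 * (T + 1) →
      8 * (7 * (T + 1)) ≤ b ^ (j + 1) → b ^ j ≤ N → b ^ j ≤ N % b ^ (j + 1) := by
    intro b _ j N hN1 hN2 h8 hbj
    have hlt : N < b ^ (j + 1) := by omega
    rw [Nat.mod_eq_of_lt hlt]
    exact hbj
  obtain ⟨N, hNa, hNb, hNc⟩ :=
    rec_aux [b1, b2, b3] hbs (by simp) (7 * (T + 1)) (by omega) (T + 1) hhyp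
  have hNS : N ∈ {N : ℕ | 0 < N ∧ (∀ d ∈ Nat.digits b1 N, d ≠ 0) ∧
      (∀ d ∈ Nat.digits b2 N, d ≠ 0) ∧ (∀ d ∈ Nat.digits b3 N, d ≠ 0)} := by
    refine ⟨by omega, ?_, ?_, ?_⟩
    · exact char_aux (by omega) N (hNc b1 (by simp))
    · exact char_aux (by omega) N (hNc b2 (by simp))
    · exact char_aux (by omega) N (hNc b3 (by simp))
  have := hT hNS
  omega
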